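/- Let n ≥ 2 be an integer, 0 < α < 2, C > 0, and ν₁ > 0. Let m > 0 and ε > 0 satisfy: m < min{ 2ν₁/(C√(α(n−1))), ν₁(1+α)/(α ε √(n−1)) } and ε < ν₁/(m√(n−1)) − α √(n−1) m C²/(4ν₁). Define λ := ν₁(1+α)/4 − α ε √(n−1) m/4 − (1/2)·√( ν₁²(1−α)²/4 + m ν₁ α(1−α) ε √(n−1)/2 + m² α²(n−1)(ε² + C²)/4 ). Then λ > 0, and for all real numbers A ≥ 0 and B ≥ 0: λ(A² + B²) ≤ (ν₁/2) A² + (α ν₁/2) B² − (α m √(n−1) C / 2) A·B − (α ε √(n−1) m / 2) B². -/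
import Mathlib

lemma quad_aux (a b c u : ℝ) (hb : 0 ≤ b) (hu : 0 ≤ u)
    (hu2 : u ^ 2 = (a - c) ^ 2 + 4 * b ^ 2)
    (hac : b ^ 2 < a * c) (hapc : 0 < a + c) :
    0 < (a + c) / 2 - u / 2 ∧ ∀ A B : ℝ, 0 ≤ A → 0 ≤ B →
      ((a + c) / 2 - u / 2) * (A ^ 2 + B ^ 2) ≤ a * A ^ 2 + c * B ^ 2 - 2 * b * (A * B) := by
  have hult : u < a + c := by nlinarith
  constructor
  · linarith
  intro A B hA hB
  have hp : 0 ≤ (a - c) / 2 + u / 2 := by nlinarith [sq_nonneg b]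
  have hq : 0 ≤ (c - a) / 2 + u / 2 := by nlinarith [sq_nonneg b]
  have hpq : ((a - c) / 2 + u / 2) * ((c - a) / 2 + u / 2) = b ^ 2 := by nlinarith
  have hbeq : b = Real.sqrt ((a - c) / 2 + u / 2) * Real.sqrt ((c - a) / 2 + u / 2) := by
    rw [← Real.sqrt_mul hp, hpq, Real.sqrt_sq hb]
  have hsp : Real.sqrt ((a - c) / 2 + u / 2) ^ 2 = (a - c) / 2 + u / 2 := Real.sq_sqrt hp
  have hsq : Real.sqrt ((c - a) / 2 + u / 2) ^ 2 = (c - a) / 2 + u / 2 := Real.sq_sqrt hq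
  have expand : ((a - c) / 2 + u / 2) * A ^ 2 - 2 * b * (A * B) +
      ((c - a) / 2 + u / 2) * B ^ 2 =
      (Real.sqrt ((a - c) / 2 + u / 2) * A - Real.sqrt ((c - a) / 2 + u / 2) * B) ^ 2 := by
    rw [hbeq]
    linear_combination (-(A ^ 2)) * hsp + (-(B ^ 2)) * hsq
  have key : 0 ≤ ((a - c) / 2 + u / 2) * A ^ 2 - 2 * b * (A * B) +
      ((c - a) / 2 + u / 2) * B ^ 2 := by rw [expand]; positivity
  nlinarith [key]

theorem stmt16 (n : ℕ) (hn : 2 ≤ n) (α : ℝ) (hα0 : 0 < α) (hα2 : α < 2)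
    (C ν₁ m ε : ℝ) (hC : 0 < C) (hν₁ : 0 < ν₁) (hm : 0 < m) (hε : 0 < ε)
    (hmlt : m < min (2 * ν₁ / (C * Real.sqrt (α * ((n : ℝ) - 1))))
      (ν₁ * (1 + α) / (α * ε * Real.sqrt ((n : ℝ) - 1))))
    (hεlt : ε < ν₁ / (m * Real.sqrt ((n : ℝ) - 1)) -
      α * Real.sqrt ((n : ℝ) - 1) * m * C ^ 2 / (4 * ν₁)) :
    0 < ν₁ * (1 + α) / 4 - α * ε * Real.sqrt ((n : ℝ) - 1) * m / 4 -
        (1 / 2) * Real.sqrt (ν₁ ^ 2 * (1 - α) ^ 2 / 4 +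
          m * ν₁ * (α * (1 - α) * ε * Real.sqrt ((n : ℝ) - 1)) / 2 +
          m ^ 2 * (α ^ 2 * ((n : ℝ) - 1) * (ε ^ 2 + C ^ 2)) / 4) ∧
    ∀ A B : ℝ, 0 ≤ A → 0 ≤ B →
      (ν₁ * (1 + α) / 4 - α * ε * Real.sqrt ((n : ℝ) - 1) * m / 4 -
          (1 / 2) * Real.sqrt (ν₁ ^ 2 * (1 - α) ^ 2 / 4 +
            m * ν₁ * (α * (1 - α) * ε * Real.sqrt ((n : ℝ) - 1)) / 2 +
            m ^ 2 * (α ^ 2 * ((n : ℝ) - 1) * (ε ^ 2 + C ^ 2)) / 4)) * (A ^ 2 + B ^ 2) ≤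
        ν₁ / 2 * A ^ 2 + α * ν₁ / 2 * B ^ 2 -
          α * m * Real.sqrt ((n : ℝ) - 1) * C / 2 * (A * B) -
          α * ε * Real.sqrt ((n : ℝ) - 1) * m / 2 * B ^ 2 := by
  have hn2 : (2 : ℝ) ≤ (n : ℝ) := by exact_mod_cast hn
  have hn1 : (0 : ℝ) ≤ (n : ℝ) - 1 := by linarith
  have hs2 : Real.sqrt ((n : ℝ) - 1) ^ 2 = (n : ℝ) - 1 := Real.sq_sqrt hn1
  have hspos : 0 < Real.sqrt ((n : ℝ) - 1) := Real.sqrt_pos.mpr (by linarith)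
  set s := Real.sqrt ((n : ℝ) - 1) with hs_def
  have hb : (0 : ℝ) ≤ α * m * s * C / 4 := by positivity
  have hIeq : ν₁ ^ 2 * (1 - α) ^ 2 / 4 +
      m * ν₁ * (α * (1 - α) * ε * s) / 2 +
      m ^ 2 * (α ^ 2 * ((n : ℝ) - 1) * (ε ^ 2 + C ^ 2)) / 4 =
      (ν₁ / 2 - (α * ν₁ / 2 - α * ε * s * m / 2)) ^ 2 + 4 * (α * m * s * C / 4) ^ 2 := by
    rw [← hs2]; ring
  have hu : (0 : ℝ) ≤ Real.sqrt (ν₁ ^ 2 * (1 - α) ^ 2 / 4 +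
      m * ν₁ * (α * (1 - α) * ε * s) / 2 +
      m ^ 2 * (α ^ 2 * ((n : ℝ) - 1) * (ε ^ 2 + C ^ 2)) / 4) := Real.sqrt_nonneg _
  have hu2 : Real.sqrt (ν₁ ^ 2 * (1 - α) ^ 2 / 4 +
      m * ν₁ * (α * (1 - α) * ε * s) / 2 +
      m ^ 2 * (α ^ 2 * ((n : ℝ) - 1) * (ε ^ 2 + C ^ 2)) / 4) ^ 2 =
      (ν₁ / 2 - (α * ν₁ / 2 - α * ε * s * m / 2)) ^ 2 + 4 * (α * m * s * C / 4) ^ 2 := by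
    rw [Real.sq_sqrt (by rw [hIeq]; positivity), hIeq]
  -- a + c > 0 from the second bound on m
  have hm2 : m < ν₁ * (1 + α) / (α * ε * s) := (lt_min_iff.mp hmlt).2
  have hden : 0 < α * ε * s := by positivity
  have hapc : 0 < ν₁ / 2 + (α * ν₁ / 2 - α * ε * s * m / 2) := by
    have h1 : m * (α * ε * s) < ν₁ * (1 + α) / (α * ε * s) * (α * ε * s) :=
      mul_lt_mul_of_pos_right hm2 hden
    rw [div_mul_cancel₀ _ (ne_of_gt hden)] at h1
    linarith [h1]
  -- b ^ 2 < a * c from the bound on ε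
  have hac : (α * m * s * C / 4) ^ 2 < ν₁ / 2 * (α * ν₁ / 2 - α * ε * s * m / 2) := by
    have hms : 0 < m * s := by positivity
    rw [div_sub_div _ _ (ne_of_gt hms) (by positivity : (4 * ν₁) ≠ 0),
      lt_div_iff₀ (by positivity)] at hεlt
    linarith [mul_lt_mul_of_pos_left hεlt hα0]
  have H := quad_aux (ν₁ / 2) (α * m * s * C / 4) (α * ν₁ / 2 - α * ε * s * m / 2)
    (Real.sqrt (ν₁ ^ 2 * (1 - α) ^ 2 / 4 +
      m * ν₁ * (α * (1 - α) * ε * s) / 2 +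
      m ^ 2 * (α ^ 2 * ((n : ℝ) - 1) * (ε ^ 2 + C ^ 2)) / 4)) hb hu hu2 hac hapc
  constructor
  · linarith [H.1]
  · intro A B hA hB
    have h := H.2 A B hA hB
    linarith [h]
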